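/- Let H be a real Hilbert space and E, F : H → ℝ twice continuously differentiable. Suppose ȳ ∈ H, c₀ > 0, ε ≥ 0 and L > 0 satisfy: (i) ∇E(ȳ) = 0 and ⟪Hess E(ȳ) v, v⟫ ≥ c₀‖v‖² for all v ∈ H (strong stability); (ii) ‖∇F(ȳ)‖ ≤ ε (consistency); (iii) ‖Hess F(ȳ) − Hess E(ȳ)‖ ≤ c₀/2 in operator norm; (iv) ‖Hess F(x) − Hess F(y)‖ ≤ L‖x − y‖ for all x, y in the closed ball of radius 4ε/c₀ around ȳ; and (v) 16Lε ≤ c₀². Then there exists ȳ_F ∈ H with ∇F(ȳ_F) = 0, ‖ȳ − ȳ_F‖ ≤ 4ε/c₀, and ⟪Hess F(ȳ_F) v, v⟫ ≥ (c₀/4)‖v‖² for all v ∈ H. -/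

import Mathlib

set_option maxHeartbeats 1000000


open scoped RealInnerProductSpace

/-- Abstract stability-plus-consistency error estimate: skeleton of the
geometry-error bound of Theorem 3.1. -/
theorem stmt_1
    {H : Type*} [NormedAddCommGroup H] [InnerProductSpace ℝ H] [CompleteSpace H]
    (E F : H → ℝ) (hE : ContDiff ℝ 2 E) (hF : ContDiff ℝ 2 F)
    (ybar : H) (c₀ ε L : ℝ) (hc₀ : 0 < c₀) (hε : 0 ≤ ε) (hL : 0 < L)
    (hcrit : gradient E ybar = 0)
    (hstab : ∀ v : H, ⟪fderiv ℝ (gradient E) ybar v, v⟫ ≥ c₀ * ‖v‖ ^ 2)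
    (hcons : ‖gradient F ybar‖ ≤ ε)
    (hhess : ‖fderiv ℝ (gradient F) ybar - fderiv ℝ (gradient E) ybar‖ ≤ c₀ / 2)
    (hLip : ∀ x ∈ Metric.closedBall ybar (4 * ε / c₀), ∀ y ∈ Metric.closedBall ybar (4 * ε / c₀),
      ‖fderiv ℝ (gradient F) x - fderiv ℝ (gradient F) y‖ ≤ L * ‖x - y‖)
    (hsmall : 16 * L * ε ≤ c₀ ^ 2) :
    ∃ yF : H, gradient F yF = 0 ∧ ‖ybar - yF‖ ≤ 4 * ε / c₀ ∧
      ∀ v : H, ⟪fderiv ℝ (gradient F) yF v, v⟫ ≥ (c₀ / 4) * ‖v‖ ^ 2 := by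
  set r : ℝ := 4 * ε / c₀ with hrdef
  have hr0 : 0 ≤ r := by positivity
  set A : H →L[ℝ] H := fderiv ℝ (gradient F) ybar with hAdef
  set B : H →L[ℝ] H := fderiv ℝ (gradient E) ybar with hBdef
  -- gradient F is C¹
  have hgradF : ContDiff ℝ 1 (gradient F) := by
    have h1 : ContDiff ℝ 1 (fderiv ℝ F) := hF.fderiv_right (by norm_num)
    have h2 : gradient F = fun x => (InnerProductSpace.toDual ℝ H).symm (fderiv ℝ F x) := rfl
    rw [h2]
    exact (InnerProductSpace.toDual ℝ H).symm.contDiff.comp h1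
  have hgdiff : Differentiable ℝ (gradient F) := hgradF.differentiable one_ne_zero
  -- coercivity of A
  have hA : ∀ v : H, (c₀ / 2) * (‖v‖ * ‖v‖) ≤ ⟪A v, v⟫ := by
    intro v
    have h1 := hstab v
    have h2 : ‖(A - B) v‖ ≤ (c₀ / 2) * ‖v‖ :=
      le_trans ((A - B).le_opNorm v) (mul_le_mul_of_nonneg_right hhess (norm_nonneg v))
    have h3 := abs_real_inner_le_norm ((A - B) v) v
    have h4 : ⟪(A - B) v, v⟫ = ⟪A v, v⟫ - ⟪B v, v⟫ := by
      rw [ContinuousLinearMap.sub_apply, inner_sub_left]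
    have h5 : |⟪(A - B) v, v⟫| ≤ (c₀ / 2) * ‖v‖ * ‖v‖ :=
      le_trans h3 (mul_le_mul_of_nonneg_right h2 (norm_nonneg v))
    have h6 := abs_le.mp h5
    nlinarith [sq_nonneg ‖v‖, norm_nonneg v]
  -- Lax–Milgram equivalence
  set Bil : H →L[ℝ] H →L[ℝ] ℝ := (innerSL ℝ).comp A with hBil
  have hBilapp : ∀ u w : H, Bil u w = ⟪A u, w⟫ := fun u w => rfl
  have coer : IsCoercive Bil := by
    refine ⟨c₀ / 2, by positivity, fun u => ?_⟩
    rw [hBilapp]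
    calc c₀ / 2 * ‖u‖ * ‖u‖ = (c₀ / 2) * (‖u‖ * ‖u‖) := by ring
      _ ≤ ⟪A u, u⟫ := hA u
  set eA : H ≃L[ℝ] H := coer.continuousLinearEquivOfBilin with heA
  have hAeq : ∀ v, eA v = A v := by
    intro v
    refine ext_inner_right ℝ fun w => ?_
    rw [coer.continuousLinearEquivOfBilin_apply, hBilapp]
  have hAeq' : ∀ v, eA.symm (A v) = v := by
    intro v; rw [← hAeq, eA.symm_apply_apply]
  -- inverse bound
  have hinv : ∀ w : H, ‖eA.symm w‖ ≤ (2 / c₀) * ‖w‖ := by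
    intro w
    set u := eA.symm w with hu
    have h1 : (c₀ / 2) * (‖u‖ * ‖u‖) ≤ ⟪A u, u⟫ := hA u
    have h2 : eA u = w := eA.apply_symm_apply w
    have h3 : ⟪A u, u⟫ ≤ ‖w‖ * ‖u‖ := by
      rw [← hAeq, h2]; exact real_inner_le_norm w u
    rcases eq_or_lt_of_le (norm_nonneg u) with h | h
    · rw [← h]; positivity
    · have : (c₀ / 2) * ‖u‖ ≤ ‖w‖ := by
        have := le_trans h1 h3
        nlinarith
      rw [div_mul_eq_mul_div, le_div_iff₀ hc₀]
      linarith
  -- Newton map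
  set Φ : H → H := fun x => x - eA.symm (gradient F x) with hΦ
  set s : Set H := Metric.closedBall ybar r with hs
  have hybar_mem : ybar ∈ s := Metric.mem_closedBall_self hr0
  have hLr : L * r ≤ c₀ / 4 := by
    rw [hrdef, mul_div_assoc', div_le_div_iff₀ hc₀ (by norm_num : (0:ℝ) < 4)]
    nlinarith
  -- mean value bound on g z := gradient F z - A z
  have hmv : ∀ x ∈ s, ∀ y ∈ s,
      ‖(gradient F y - A y) - (gradient F x - A x)‖ ≤ (L * r) * ‖y - x‖ := by
    intro x hx y hy
    have hdiff : ∀ z ∈ s, DifferentiableAt ℝ (fun w => gradient F w - A w) z :=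
      fun z _ => (hgdiff z).sub A.differentiableAt
    have hbound : ∀ z ∈ s, ‖fderiv ℝ (fun w => gradient F w - A w) z‖ ≤ L * r := by
      intro z hz
      rw [fderiv_fun_sub (hgdiff z) A.differentiableAt, A.fderiv]
      refine le_trans (hLip z hz ybar (Metric.mem_closedBall_self hr0)) ?_
      have : ‖z - ybar‖ ≤ r := by
        rw [← dist_eq_norm]; exact Metric.mem_closedBall.mp hz
      exact mul_le_mul_of_nonneg_left this hL.le
    exact Convex.norm_image_sub_le_of_norm_fderiv_le hdiff hbound (convex_closedBall _ _) hx hy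
  -- contraction estimate
  have hcontr : ∀ x ∈ s, ∀ y ∈ s, ‖Φ x - Φ y‖ ≤ (1 / 2) * ‖x - y‖ := by
    intro x hx y hy
    have h1 : Φ x - Φ y = eA.symm ((A x - gradient F x) - (A y - gradient F y)) := by
      simp only [hΦ, map_sub, hAeq']
    have h2 : (A x - gradient F x) - (A y - gradient F y)
        = -((gradient F x - A x) - (gradient F y - A y)) := by abel
    calc ‖Φ x - Φ y‖ = ‖eA.symm ((A x - gradient F x) - (A y - gradient F y))‖ := by rw [h1]
      _ ≤ (2 / c₀) * ‖(A x - gradient F x) - (A y - gradient F y)‖ := hinv _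
      _ = (2 / c₀) * ‖(gradient F x - A x) - (gradient F y - A y)‖ := by rw [h2, norm_neg]
      _ ≤ (2 / c₀) * ((L * r) * ‖x - y‖) := by
          have := hmv y hy x hx
          gcongr
      _ ≤ (2 / c₀) * ((c₀ / 4) * ‖x - y‖) := by
          gcongr
      _ = (1 / 2) * ‖x - y‖ := by field_simp; ring
  -- Φ maps s to s
  have hΦybar : ‖Φ ybar - ybar‖ ≤ r / 2 := by
    have h1 : Φ ybar - ybar = -(eA.symm (gradient F ybar)) := by
      simp only [hΦ]; abel
    rw [h1, norm_neg]
    calc ‖eA.symm (gradient F ybar)‖ ≤ (2 / c₀) * ‖gradient F ybar‖ := hinv _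
      _ ≤ (2 / c₀) * ε := by gcongr
      _ = r / 2 := by rw [hrdef]; field_simp; ring
  have hmaps : ∀ x ∈ s, Φ x ∈ s := by
    intro x hx
    have hxn : ‖x - ybar‖ ≤ r := by rw [← dist_eq_norm]; exact Metric.mem_closedBall.mp hx
    have h1 : ‖Φ x - ybar‖ ≤ r := by
      calc ‖Φ x - ybar‖ = ‖(Φ x - Φ ybar) + (Φ ybar - ybar)‖ := by abel_nf
        _ ≤ ‖Φ x - Φ ybar‖ + ‖Φ ybar - ybar‖ := norm_add_le _ _
        _ ≤ (1 / 2) * ‖x - ybar‖ + r / 2 := add_le_add (hcontr x hx ybar hybar_mem) hΦybar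
        _ ≤ (1 / 2) * r + r / 2 := by gcongr
        _ = r := by ring
    rw [hs, Metric.mem_closedBall, dist_eq_norm]
    exact h1
  -- fixed point via Banach
  have hclosed : IsClosed s := Metric.isClosed_closedBall
  haveI : CompleteSpace s := hclosed.completeSpace_coe
  haveI : Nonempty s := ⟨⟨ybar, hybar_mem⟩⟩
  set Φ' : s → s := fun x => ⟨Φ x, hmaps x x.2⟩ with hΦ'
  have hcontr' : ContractingWith (1/2 : NNReal) Φ' := by
    constructor
    · rw [← NNReal.coe_lt_coe]; norm_num
    · refine LipschitzWith.of_dist_le_mul fun a b => ?_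
      have : dist (Φ' a : H) (Φ' b : H) ≤ (1/2 : ℝ) * dist (a : H) (b : H) := by
        rw [dist_eq_norm, dist_eq_norm]
        exact hcontr a a.2 b b.2
      simpa [Subtype.dist_eq] using this
  set yF' : s := ContractingWith.fixedPoint Φ' hcontr' with hyF'
  have hfix : Φ' yF' = yF' := hcontr'.fixedPoint_isFixedPt
  refine ⟨(yF' : H), ?_, ?_, ?_⟩
  · have h1 : Φ (yF' : H) = (yF' : H) := congrArg Subtype.val hfix
    have h2 : eA.symm (gradient F (yF' : H)) = 0 := by
      have := sub_eq_self.mp h1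
      exact this
    have h3 : gradient F (yF' : H) = eA (eA.symm (gradient F (yF' : H))) :=
      (eA.apply_symm_apply _).symm
    rw [h3, h2, map_zero]
  · rw [norm_sub_rev, ← dist_eq_norm]
    exact Metric.mem_closedBall.mp yF'.2
  · intro v
    set D : H →L[ℝ] H := fderiv ℝ (gradient F) (yF' : H) with hD
    have h1 : ‖D - A‖ ≤ c₀ / 4 := by
      refine le_trans (hLip _ yF'.2 ybar hybar_mem) ?_
      have : ‖(yF' : H) - ybar‖ ≤ r := by
        rw [← dist_eq_norm]; exact Metric.mem_closedBall.mp yF'.2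
      calc L * ‖(yF' : H) - ybar‖ ≤ L * r := by gcongr
        _ ≤ c₀ / 4 := hLr
    have h2 : ‖(D - A) v‖ ≤ (c₀ / 4) * ‖v‖ :=
      le_trans ((D - A).le_opNorm v) (mul_le_mul_of_nonneg_right h1 (norm_nonneg v))
    have h3 := abs_real_inner_le_norm ((D - A) v) v
    have h4 : ⟪(D - A) v, v⟫ = ⟪D v, v⟫ - ⟪A v, v⟫ := by
      rw [ContinuousLinearMap.sub_apply, inner_sub_left]
    have h5 : |⟪(D - A) v, v⟫| ≤ (c₀ / 4) * ‖v‖ * ‖v‖ :=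
      le_trans h3 (mul_le_mul_of_nonneg_right h2 (norm_nonneg v))
    have h6 := abs_le.mp h5
    have h7 := hA v
    have h8 : ‖v‖ ^ 2 = ‖v‖ * ‖v‖ := sq ‖v‖
    rw [ge_iff_le, h8]
    nlinarith [norm_nonneg v]
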